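/- (Reduction lemma) Let X be a type with decidable equality, let α : X, and let L₁ and L₂ be lists over X that are permutations of each other (anagrams). Let N be a normal subgroup of FreeGroup X such that ⁅FreeGroup.of α, FreeGroup.of β⁆ ∈ N for every letter β occurring in L₁. If w(L₁)·w(L₂)⁻¹ ∈ N, then w(L̂₁)·w(L̂₂)⁻¹ ∈ N, where L̂ᵢ denotes the list Lᵢ with all occurrences of the letter α deleted (Lᵢ.filter (· ≠ α)). -/

import Mathlib

/-- The word in the free group spelled by a list of letters. -/
def wrd {X : Type*} (L : List X) : FreeGroup X := (L.map FreeGroup.of).prod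

open scoped commutatorElement

lemma wrd_key {X : Type*} [DecidableEq X] (α : X) {G : Type*} [Group G]
    (f : FreeGroup X →* G) (L : List X)
    (h : ∀ β ∈ L, Commute (f (FreeGroup.of α)) (f (FreeGroup.of β))) :
    f (wrd L) = f (wrd (L.filter (· ≠ α))) * (f (FreeGroup.of α)) ^ (L.count α) := by
  induction L with
  | nil => simp [wrd]
  | cons x L ih =>
    have hx := h x List.mem_cons_self
    have hL : ∀ β ∈ L, Commute (f (FreeGroup.of α)) (f (FreeGroup.of β)) :=
      fun β hβ => h β (List.mem_cons_of_mem _ hβ)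
    have hcons : f (wrd (x :: L)) = f (FreeGroup.of x) * f (wrd L) := by
      simp [wrd]
    have hcomm_filt : Commute (f (FreeGroup.of α)) (f (wrd (L.filter (· ≠ α)))) := by
      have : f (wrd (L.filter (· ≠ α)))
          = ((L.filter (· ≠ α)).map (fun b => f (FreeGroup.of b))).prod := by
        simp only [wrd, map_list_prod, List.map_map]
        rfl
      rw [this]
      apply Commute.list_prod_right
      intro y hy
      simp only [List.mem_map] at hy
      obtain ⟨b, hb, rfl⟩ := hy
      exact hL b (List.mem_of_mem_filter hb)
    by_cases hxa : x = α
    · subst hxa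
      rw [hcons, ih hL]
      have hfilt : (x :: L).filter (· ≠ x) = L.filter (· ≠ x) := by
        simp [List.filter_cons]
      rw [hfilt, List.count_cons_self, ← mul_assoc, hcomm_filt.eq, mul_assoc, pow_succ']
    · rw [hcons, ih hL]
      have hfilt : (x :: L).filter (· ≠ α) = x :: L.filter (· ≠ α) := by
        simp [List.filter_cons, hxa]
      have hcount : (x :: L).count α = L.count α := List.count_cons_of_ne (by
        exact fun h' => hxa h')
      rw [hfilt, hcount]
      simp [wrd, mul_assoc]

theorem stmt_6 {X : Type*} [DecidableEq X] (α : X) (L₁ L₂ : List X)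
    (hperm : List.Perm L₁ L₂)
    (N : Subgroup (FreeGroup X)) [N.Normal]
    (hcomm : ∀ β ∈ L₁, ⁅FreeGroup.of α, FreeGroup.of β⁆ ∈ N)
    (hrel : wrd L₁ * (wrd L₂)⁻¹ ∈ N) :
    wrd (L₁.filter (· ≠ α)) * (wrd (L₂.filter (· ≠ α)))⁻¹ ∈ N := by
  let f := QuotientGroup.mk' N
  have hker : ∀ x : FreeGroup X, f x = 1 ↔ x ∈ N := fun x => QuotientGroup.eq_one_iff x
  have hc1 : ∀ β ∈ L₁, Commute (f (FreeGroup.of α)) (f (FreeGroup.of β)) := by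
    intro β hβ
    have := (hker _).2 (hcomm β hβ)
    rw [map_commutatorElement] at this
    exact commutatorElement_eq_one_iff_commute.mp this
  have hc2 : ∀ β ∈ L₂, Commute (f (FreeGroup.of α)) (f (FreeGroup.of β)) :=
    fun β hβ => hc1 β (hperm.mem_iff.mpr hβ)
  rw [← hker]
  have h1 := wrd_key α f L₁ hc1
  have h2 := wrd_key α f L₂ hc2
  have hcnt : L₁.count α = L₂.count α := hperm.count_eq α
  have hrel' : f (wrd L₁) = f (wrd L₂) := by
    have := (hker _).2 hrel
    rw [map_mul, map_inv] at this
    exact mul_inv_eq_one.mp this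
  rw [map_mul, map_inv]
  rw [h1, h2, hcnt] at hrel'
  have := mul_right_cancel hrel'
  rw [this]
  group
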